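/- Every 1-Pareto optimal matching is dominated by a Pareto optimal matching whose image is contained in its image: if τ₀ is a matching with no blocking coalition of size one, then there exists a Pareto optimal matching τ₁ with τ₁(A) ⊆ { b ∈ B : b ∈ τ₀(A) }, and since |τ₁(A)| = |τ₀(A)| = |A|, in fact τ₁(A) = τ₀(A). -/

import Mathlib

/-- `S` is a blocking coalition of the matching `τ`. -/
def IsBlocking {A B : Type*} (pref : A → B → B → Prop) (τ : A → B) (S : Set A) : Prop :=
  S.Nonempty ∧ ∃ τ' : A → B, Function.Injective τ' ∧
    (∀ a ∉ S, τ' a = τ a) ∧ ∀ a ∈ S, pref a (τ' a) (τ a)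

/-- `τ` is a Pareto optimal matching. -/
def IsPOM {A B : Type*} (pref : A → B → B → Prop) (τ : A → B) : Prop :=
  Function.Injective τ ∧ ∀ S : Set A, ¬ IsBlocking pref τ S

/-- every 1-Pareto optimal matching has the same image as some
Pareto optimal matching. -/
theorem stmt14 {A B : Type*} [Fintype A] [Fintype B]
    (pref : A → B → B → Prop) (hpref : ∀ a, IsStrictTotalOrder B (pref a))
    (τ₀ : A → B) (h0 : Function.Injective τ₀)
    (h1 : ∀ a : A, ¬ IsBlocking pref τ₀ {a}) :
    ∃ τ₁ : A → B, IsPOM pref τ₁ ∧ Set.range τ₁ = Set.range τ₀ := by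
  classical
  haveI : ∀ a, IsTrans B (pref a) := fun a => (hpref a).toIsTrans
  haveI : ∀ a, IsIrrefl B (pref a) := fun a => by haveI := hpref a; infer_instance
  -- domination relation
  set dom : (A → B) → (A → B) → Prop :=
    fun σ τ => (∀ a, σ a = τ a ∨ pref a (σ a) (τ a)) ∧ σ ≠ τ with hdom
  haveI : IsTrans (A → B) dom := by
    constructor
    rintro σ τ ρ ⟨h1', h2'⟩ ⟨h3', h4'⟩
    constructor
    · intro a
      rcases h1' a with h | h <;> rcases h3' a with h' | h'
      · exact Or.inl (h.trans h')
      · exact Or.inr (h ▸ h')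
      · exact Or.inr (h' ▸ h)
      · exact Or.inr (Trans.trans h h')
    · rintro rfl
      apply h2'
      funext a
      rcases h1' a with h | h
      · exact h
      · rcases h3' a with h' | h'
        · exact h'.symm ▸ rfl
        · exact absurd (Trans.trans h h') (irrefl _)
  haveI : IsIrrefl (A → B) dom := ⟨fun σ h => h.2 rfl⟩
  have hwf : WellFounded dom := Finite.wellFounded_of_trans_of_irrefl dom
  set P : Set (A → B) := {τ | Function.Injective τ ∧ Set.range τ = Set.range τ₀ ∧
      ∀ a, τ a = τ₀ a ∨ pref a (τ a) (τ₀ a)} with hP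
  have hτ₀P : τ₀ ∈ P := ⟨h0, rfl, fun a => Or.inl rfl⟩
  obtain ⟨τ₁, hτ₁P, hmax⟩ := hwf.has_min P ⟨τ₀, hτ₀P⟩
  obtain ⟨hinj, hrange, hdom0⟩ := hτ₁P
  refine ⟨τ₁, ⟨hinj, ?_⟩, hrange⟩
  rintro S ⟨hSne, τ', hτ'inj, hout, hin⟩
  -- every value of τ' lies in range τ₀
  have hmem : ∀ a, τ' a ∈ Set.range τ₀ := by
    intro a
    by_cases haS : a ∈ S
    · by_contra hnot
      -- single-agent blocking coalition of τ₀
      have hpref0 : pref a (τ' a) (τ₀ a) := by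
        rcases hdom0 a with h | h
        · exact h ▸ hin a haS
        · exact Trans.trans (hin a haS) h
      apply h1 a
      refine ⟨⟨a, rfl⟩, Function.update τ₀ a (τ' a), ?_, ?_, ?_⟩
      · intro x y hxy
        by_cases hx : x = a <;> by_cases hy : y = a
        · rw [hx, hy]
        · rw [hx, Function.update_self, Function.update_of_ne hy] at hxy
          exact absurd ⟨y, hxy.symm⟩ hnot
        · rw [hy, Function.update_self, Function.update_of_ne hx] at hxy
          exact absurd ⟨x, hxy⟩ hnot
        · rw [Function.update_of_ne hx, Function.update_of_ne hy] at hxy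
          exact h0 hxy
      · intro x hx
        simp only [Set.mem_singleton_iff] at hx
        exact Function.update_of_ne hx _ _
      · intro x hx
        simp only [Set.mem_singleton_iff] at hx
        subst hx
        simpa using hpref0
    · rw [hout a haS, ← hrange]
      exact ⟨a, rfl⟩
  -- hence range τ' = range τ₀
  have hsub : Set.range τ' ⊆ Set.range τ₀ := by rintro b ⟨a, rfl⟩; exact hmem a
  have hcard : ∀ f : A → B, Function.Injective f → (Set.range f).ncard = Fintype.card A := by
    intro f hf
    rw [Set.ncard_eq_toFinset_card', Set.toFinset_range,
      Finset.card_image_of_injective _ hf, Finset.card_univ]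
  have hrange' : Set.range τ' = Set.range τ₀ := by
    exact Set.eq_of_subset_of_ncard_le hsub
      (le_of_eq ((hcard τ₀ h0).trans (hcard τ' hτ'inj).symm)) (Set.toFinite _)
  obtain ⟨a₀, ha₀⟩ := hSne
  have hne : τ' ≠ τ₁ := by
    intro h
    exact absurd (h ▸ hin a₀ ha₀) (irrefl _)
  apply hmax τ' ⟨hτ'inj, hrange', ?_⟩
  · refine ⟨fun a => ?_, hne⟩
    by_cases haS : a ∈ S
    · exact Or.inr (hin a haS)
    · exact Or.inl (hout a haS)
  · intro a
    by_cases haS : a ∈ S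
    · rcases hdom0 a with h | h
      · exact Or.inr (h ▸ hin a haS)
      · exact Or.inr (Trans.trans (hin a haS) h)
    · rw [hout a haS]; exact hdom0 a
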